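/- arXiv:2605.01493 — 7 statements merged into one kernel-verified Lean document; each statement's English description precedes it below -/
import Mathlib

section
/- The convex hull of the graph of the monomial y = x_1 x_2 ... x_n over the box [a, b] (with 0 ≤ a_i < b_i for all i) is a polytope whose extreme points are exactly the 2^n points obtained by setting each x_i to either a_i or b_i and y to the corresponding product. -/
open Finset Set

/-- If a linear functional is at most `c` on `S` and equals `c` on `S` only at `p`,
then the same holds on the convex hull. -/
lemma max_unique_hull {E : Type*} [AddCommGroup E] [Module ℝ E]
    (l : E →ₗ[ℝ] ℝ) (S : Set E) (c : ℝ) (p : E)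
    (hle : ∀ s ∈ S, l s ≤ c) (heq : ∀ s ∈ S, l s = c → s = p) :
    ∀ q ∈ convexHull ℝ S, l q = c → q = p := by
  intro q hq hlq
  rw [_root_.convexHull_eq] at hq
  obtain ⟨ι, t, w, z, hw₀, hw₁, hz, rfl⟩ := hq
  rw [Finset.centerMass_eq_of_sum_1 _ _ hw₁] at hlq ⊢
  have key : ∀ i ∈ t, w i ≠ 0 → l (z i) = c := by
    by_contra h
    push_neg at h
    obtain ⟨j, hjt, hwj, hj⟩ := h
    have hlt : ∑ i ∈ t, w i * l (z i) < ∑ i ∈ t, w i * c := by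
      refine Finset.sum_lt_sum (fun i hi => ?_) ⟨j, hjt, ?_⟩
      · exact mul_le_mul_of_nonneg_left (hle _ (hz i hi)) (hw₀ i hi)
      · exact mul_lt_mul_of_pos_left (lt_of_le_of_ne (hle _ (hz j hjt)) hj)
          (lt_of_le_of_ne (hw₀ j hjt) (Ne.symm hwj))
    rw [← Finset.sum_mul, hw₁, one_mul] at hlt
    have : l (∑ i ∈ t, w i • z i) = ∑ i ∈ t, w i * l (z i) := by
      rw [map_sum]; simp [smul_eq_mul]
    rw [this] at hlq
    exact absurd hlq (ne_of_lt hlt)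
  have : ∀ i ∈ t, w i • z i = w i • p := by
    intro i hi
    rcases eq_or_ne (w i) 0 with h | h
    · simp [h]
    · rw [heq _ (hz i hi) (key i hi h)]
  rw [Finset.sum_congr rfl this, ← Finset.sum_smul, hw₁, one_smul]

/-- The extreme points of the convex hull of the graph of the monomial
`y = x₁⋯xₙ` over the box `[a,b]` (with `0 ≤ aᵢ < bᵢ`) are exactly the `2ⁿ`
points obtained by setting each `xᵢ` to `aᵢ` or `bᵢ` and `y` to the product. -/
theorem extremePoints_monomial_hull (n : ℕ) (hn : 2 ≤ n) (a b : Fin n → ℝ)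
    (ha : ∀ i, 0 ≤ a i) (hab : ∀ i, a i < b i) :
    Set.extremePoints ℝ
      (convexHull ℝ {p : (Fin n → ℝ) × ℝ |
        (∀ i, a i ≤ p.1 i ∧ p.1 i ≤ b i) ∧ p.2 = ∏ i, p.1 i}) =
      {p : (Fin n → ℝ) × ℝ |
        (∀ i, p.1 i = a i ∨ p.1 i = b i) ∧ p.2 = ∏ i, p.1 i} := by
  classical
  set S : Set ((Fin n → ℝ) × ℝ) := {p : (Fin n → ℝ) × ℝ |
    (∀ i, a i ≤ p.1 i ∧ p.1 i ≤ b i) ∧ p.2 = ∏ i, p.1 i} with hSdef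
  ext p
  constructor
  · -- extreme point → vertex
    intro hp
    have hpS : p ∈ S := extremePoints_convexHull_subset hp
    obtain ⟨hbox, hprod⟩ := hpS
    refine ⟨fun i => ?_, hprod⟩
    by_contra h
    push_neg at h
    obtain ⟨h1, h2⟩ := h
    have hlt1 : a i < p.1 i := lt_of_le_of_ne (hbox i).1 (Ne.symm h1)
    have hlt2 : p.1 i < b i := lt_of_le_of_ne (hbox i).2 h2
    set ε : ℝ := min (p.1 i - a i) (b i - p.1 i) with hε
    have hε1 : ε ≤ p.1 i - a i := min_le_left _ _
    have hε2 : ε ≤ b i - p.1 i := min_le_right _ _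
    have hε0 : 0 < ε := lt_min (by linarith) (by linarith)
    set xm : Fin n → ℝ := Function.update p.1 i (p.1 i - ε) with hxm
    set xp : Fin n → ℝ := Function.update p.1 i (p.1 i + ε) with hxp
    have hmemm : (xm, ∏ j, xm j) ∈ S := by
      refine ⟨fun j => ?_, rfl⟩
      rcases eq_or_ne j i with rfl | hj
      · simp only [hxm, Function.update_self]
        constructor <;> linarith
      · simp only [hxm, Function.update_of_ne hj]
        exact hbox j
    have hmemp : (xp, ∏ j, xp j) ∈ S := by
      refine ⟨fun j => ?_, rfl⟩
      rcases eq_or_ne j i with rfl | hj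
      · simp only [hxp, Function.update_self]
        constructor <;> linarith
      · simp only [hxp, Function.update_of_ne hj]
        exact hbox j
    have hseg : p ∈ openSegment ℝ ((xm, ∏ j, xm j) : (Fin n → ℝ) × ℝ) (xp, ∏ j, xp j) := by
      refine ⟨1/2, 1/2, by norm_num, by norm_num, by norm_num, ?_⟩
      have hR : ∀ (t : ℝ), ∏ j, Function.update p.1 i t j = t * ∏ j ∈ Finset.univ \ {i}, p.1 j :=
        fun t => Finset.prod_update_of_mem (Finset.mem_univ i) p.1 t
      have hRp : ∏ j, p.1 j = p.1 i * ∏ j ∈ Finset.univ \ {i}, p.1 j :=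
        Finset.prod_eq_mul_prod_sdiff_singleton_of_mem (Finset.mem_univ i) p.1
      apply Prod.ext
      · funext j
        simp only [Prod.smul_fst, Prod.fst_add, Pi.add_apply, Pi.smul_apply, smul_eq_mul]
        rcases eq_or_ne j i with rfl | hj
        · simp only [hxm, hxp, Function.update_self]; ring
        · simp only [hxm, hxp, Function.update_of_ne hj]; ring
      · simp only [Prod.smul_snd, Prod.snd_add, smul_eq_mul, hxm, hxp, hR, hprod, hRp]
        ring
    have := (hp.2 (subset_convexHull ℝ S hmemm) (subset_convexHull ℝ S hmemp) hseg)
    have hcontra : xm i = p.1 i := by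
      have := congrArg Prod.fst this
      exact congrFun this i
    simp only [hxm, Function.update_self] at hcontra
    linarith
  · -- vertex → extreme point
    rintro ⟨hp1, hp2⟩
    have hpS : p ∈ S := by
      refine ⟨fun i => ?_, hp2⟩
      rcases hp1 i with h | h <;> rw [h]
      · exact ⟨le_refl _, (hab i).le⟩
      · exact ⟨(hab i).le, le_refl _⟩
    set σ : Fin n → ℝ := fun i => if p.1 i = a i then -1 else 1 with hσ
    set l : ((Fin n → ℝ) × ℝ) →ₗ[ℝ] ℝ :=
      { toFun := fun q => ∑ i, σ i * q.1 i
        map_add' := by intro x y; simp [mul_add, Finset.sum_add_distrib]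
        map_smul' := by intro c x; simp [Finset.mul_sum, mul_left_comm] } with hl
    have hlapp : ∀ q : (Fin n → ℝ) × ℝ, l q = ∑ i, σ i * q.1 i := fun q => rfl
    have hterm : ∀ (x : Fin n → ℝ), (∀ i, a i ≤ x i ∧ x i ≤ b i) →
        ∀ i, σ i * x i ≤ σ i * p.1 i := by
      intro x hx i
      by_cases hi : p.1 i = a i
      · simp only [hσ, if_pos hi, hi]
        nlinarith [(hx i).1]
      · have hbi : p.1 i = b i := (hp1 i).resolve_left hi
        simp only [hσ, if_neg hi, hbi, one_mul]
        exact (hx i).2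
    have htermeq : ∀ (x : Fin n → ℝ), (∀ i, a i ≤ x i ∧ x i ≤ b i) →
        ∀ i, σ i * x i = σ i * p.1 i → x i = p.1 i := by
      intro x hx i hxi
      by_cases hi : p.1 i = a i
      · simp only [hσ, if_pos hi] at hxi
        linarith [hxi]
      · simp only [hσ, if_neg hi, one_mul] at hxi
        exact hxi
    have hle : ∀ s ∈ S, l s ≤ l p := by
      intro s hs
      rw [hlapp, hlapp]
      exact Finset.sum_le_sum (fun i _ => hterm s.1 hs.1 i)
    have heq : ∀ s ∈ S, l s = l p → s = p := by
      intro s hs h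
      rw [hlapp, hlapp] at h
      have hall := (Finset.sum_eq_sum_iff_of_le (fun i _ => hterm s.1 hs.1 i)).1 h
      have h1 : s.1 = p.1 := funext fun i => htermeq s.1 hs.1 i (hall i (Finset.mem_univ i))
      have h2 : s.2 = p.2 := by rw [hs.2, h1, hp2]
      exact Prod.ext h1 h2
    have hhull : ∀ q ∈ convexHull ℝ S, l q ≤ l p := by
      intro q hq
      exact convexHull_min hle (convex_halfSpace_le (LinearMap.isLinear l) (l p)) hq
    rw [mem_extremePoints]
    refine ⟨subset_convexHull ℝ S hpS, ?_⟩
    intro x₁ hx₁ x₂ hx₂ hseg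
    obtain ⟨u, v, hu, hv, huv, hsum⟩ := hseg
    have hcomb : u * l x₁ + v * l x₂ = l p := by
      rw [← hsum, map_add, map_smul, map_smul]; simp [smul_eq_mul]
    have hsplit : u * l p + v * l p = l p := by rw [← add_mul, huv, one_mul]
    have e1 : l x₁ = l p := by
      by_contra h
      have h1 : l x₁ < l p := lt_of_le_of_ne (hhull x₁ hx₁) h
      linarith [mul_lt_mul_of_pos_left h1 hu, mul_le_mul_of_nonneg_left (hhull x₂ hx₂) hv.le]
    have e2 : l x₂ = l p := by
      by_contra h
      have h2 : l x₂ < l p := lt_of_le_of_ne (hhull x₂ hx₂) h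
      linarith [mul_lt_mul_of_pos_left h2 hv, mul_le_mul_of_nonneg_left (hhull x₁ hx₁) hu.le]
    exact ⟨max_unique_hull l S (l p) p hle heq x₁ hx₁ e1,
           max_unique_hull l S (l p) p hle heq x₂ hx₂ e2⟩
end

section
/- If a_i = 0 for all i, the inequality -y + Σ_{i=1}^n (∏_{j≠i} b_j) x_i ≤ (n-1) ∏_{i=1}^n b_i is valid for C_n(0, b), i.e., holds for every point (x, y) with 0 ≤ x ≤ b and y = ∏ x_i. -/
/-- Weierstrass product inequality. -/
lemma weierstrass_aux {ι : Type*} [DecidableEq ι] (s : Finset ι) (u : ι → ℝ)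
    (h : ∀ i ∈ s, 0 ≤ u i ∧ u i ≤ 1) :
    1 - ∑ i ∈ s, u i ≤ ∏ i ∈ s, (1 - u i) := by
  induction s using Finset.induction_on with
  | empty => simp
  | @insert a s ha ih =>
    rw [Finset.sum_insert ha, Finset.prod_insert ha]
    have hua := h a (Finset.mem_insert_self a s)
    have ih' := ih (fun i hi => h i (Finset.mem_insert_of_mem hi))
    have hprod : (0:ℝ) ≤ ∏ i ∈ s, (1 - u i) :=
      Finset.prod_nonneg fun i hi => by linarith [(h i (Finset.mem_insert_of_mem hi)).2]
    have hsum : (0:ℝ) ≤ ∑ i ∈ s, u i :=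
      Finset.sum_nonneg fun i hi => (h i (Finset.mem_insert_of_mem hi)).1
    nlinarith [mul_nonneg hua.1 hsum, mul_nonneg hua.1 hprod]

/-- If `a = 0`, the inequality `-y + Σᵢ (∏_{j≠i} bⱼ) xᵢ ≤ (n-1) ∏ᵢ bᵢ` holds for
every point of the graph of the monomial on the box `[0,b]`. -/
theorem monomial_facet_valid (n : ℕ) (hn : 2 ≤ n) (b : Fin n → ℝ)
    (hb : ∀ i, 0 < b i) (x : Fin n → ℝ)
    (hx : ∀ i, 0 ≤ x i ∧ x i ≤ b i) :
    -(∏ i, x i) + ∑ i, (∏ j ∈ Finset.univ.erase i, b j) * x i ≤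
      ((n : ℝ) - 1) * ∏ i, b i := by
  set t : Fin n → ℝ := fun i => x i / b i with ht
  have hbprod : (0:ℝ) < ∏ i, b i := Finset.prod_pos fun i _ => hb i
  have ht01 : ∀ i, 0 ≤ t i ∧ t i ≤ 1 := fun i => by
    constructor
    · exact div_nonneg (hx i).1 (hb i).le
    · rw [div_le_one (hb i)]; exact (hx i).2
  have hxprod : ∏ i, x i = (∏ i, b i) * ∏ i, t i := by
    rw [← Finset.prod_mul_distrib]
    refine Finset.prod_congr rfl fun i _ => ?_
    rw [ht]; field_simp [(hb i).ne']
  have hterm : ∀ i, (∏ j ∈ Finset.univ.erase i, b j) * x i = (∏ j, b j) * t i := by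
    intro i
    have := Finset.mul_prod_erase Finset.univ b (Finset.mem_univ i)
    rw [← this, ht]
    field_simp [(hb i).ne']
  have hsum : ∑ i, (∏ j ∈ Finset.univ.erase i, b j) * x i = (∏ j, b j) * ∑ i, t i := by
    rw [Finset.mul_sum]; exact Finset.sum_congr rfl fun i _ => hterm i
  rw [hxprod, hsum]
  have key : ∑ i, t i - ∏ i, t i ≤ (n:ℝ) - 1 := by
    have := weierstrass_aux Finset.univ (fun i => 1 - t i)
      (fun i _ => by constructor <;> linarith [(ht01 i).1, (ht01 i).2])
    simp only [sub_sub_cancel] at this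
    rw [Finset.sum_sub_distrib, Finset.sum_const, Finset.card_univ, Fintype.card_fin,
      nsmul_eq_mul, mul_one] at this
    linarith
  nlinarith [mul_le_mul_of_nonneg_left key hbprod.le]
end

section
/- The inequality y - Σ_{i=1}^{n-1} (a_n ∏_{j<n, j≠i} b_j) x_i + (n-2) a_n ∏_{j<n} b_j ≥ 0 holds at every extreme point of C_n^1, i.e., for every choice x_i ∈ {0, b_i} (i < n), x_n ∈ {a_n, b_n}, y = ∏ x_i. -/
/-- The inequality `y - Σ_{i<n} (aₙ ∏_{j<n, j≠i} bⱼ) xᵢ + (n-2) aₙ ∏_{j<n} bⱼ ≥ 0`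
holds at every extreme point of `C_n^1`. -/
theorem first_inequality_valid (n : ℕ) (hn : 2 ≤ n) (b : Fin (n - 1) → ℝ)
    (hb : ∀ i, 0 < b i) (an bn : ℝ) (han : 0 ≤ an) (hab : an < bn)
    (x : Fin (n - 1) → ℝ) (hx : ∀ i, x i = 0 ∨ x i = b i)
    (xn : ℝ) (hxn : xn = an ∨ xn = bn) :
    0 ≤ (∏ i, x i) * xn -
        (∑ i, (an * ∏ j ∈ Finset.univ.erase i, b j) * x i) +
        ((n : ℝ) - 2) * an * ∏ j, b j := by
  set P := ∏ j, b j with hP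
  have hPpos : 0 < P := Finset.prod_pos (fun i _ => hb i)
  set S := Finset.univ.filter (fun i => x i = b i) with hS
  have hsum : (∑ i, (an * ∏ j ∈ Finset.univ.erase i, b j) * x i)
      = (S.card : ℝ) * (an * P) := by
    rw [← Finset.sum_filter_of_ne (p := fun i => x i = b i)
      (by intro i _ h; rcases hx i with h0 | hb'
          · exfalso; exact h (by rw [h0, mul_zero])
          · exact hb')]
    rw [Finset.sum_congr rfl (fun i hi => ?_), Finset.sum_const, nsmul_eq_mul]
    have hib : x i = b i := (Finset.mem_filter.mp hi).2
    rw [hib, mul_assoc, Finset.prod_erase_mul _ _ (Finset.mem_univ i)]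
  rw [hsum]
  have hcard : ((Fintype.card (Fin (n-1)) : ℕ) : ℝ) = (n : ℝ) - 1 := by
    rw [Fintype.card_fin]
    have : (1 : ℕ) ≤ n := le_trans (by norm_num) hn
    push_cast [Nat.cast_sub this]
    ring
  by_cases hall : ∀ i, x i = b i
  · have hprod : ∏ i, x i = P := Finset.prod_congr rfl (fun i _ => hall i)
    have hScard : S = Finset.univ := by
      ext i; simp [hS, hall i]
    rw [hprod, hScard, Finset.card_univ, hcard]
    have hxna : an ≤ xn := by rcases hxn with h | h <;> rw [h]; exact le_of_lt hab
    nlinarith [mul_le_mul_of_nonneg_left hxna (le_of_lt hPpos)]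
  · push_neg at hall
    obtain ⟨i, hi⟩ := hall
    have hxi : x i = 0 := by rcases hx i with h | h; exact h; exact absurd h hi
    have hprod : ∏ j, x j = 0 := Finset.prod_eq_zero (Finset.mem_univ i) hxi
    have hSsub : S ⊆ Finset.univ.erase i := by
      intro j hj
      rcases Finset.mem_filter.mp hj with ⟨_, hjb⟩
      refine Finset.mem_erase.mpr ⟨?_, Finset.mem_univ j⟩
      rintro rfl; exact hi hjb
    have hScard : (S.card : ℝ) ≤ (n : ℝ) - 2 := by
      have h1 : S.card ≤ (Finset.univ.erase i).card := Finset.card_le_card hSsub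
      rw [Finset.card_erase_of_mem (Finset.mem_univ i), Finset.card_univ] at h1
      have h2 : ((Fintype.card (Fin (n-1)) - 1 : ℕ) : ℝ) = (n : ℝ) - 2 := by
        rw [Fintype.card_fin]
        have hn1 : 1 ≤ n - 1 := by omega
        rw [Nat.cast_sub hn1, Nat.cast_sub (by omega : 1 ≤ n)]
        push_cast; ring
      calc (S.card : ℝ) ≤ ((Fintype.card (Fin (n-1)) - 1 : ℕ) : ℝ) := by exact_mod_cast h1
        _ = (n : ℝ) - 2 := h2
    rw [hprod]
    nlinarith [mul_nonneg han (le_of_lt hPpos)]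
end

section
/- The inequality y - Σ_{i=1}^n (∏_{j≠i} b_j) x_i + (n-1) ∏_{j=1}^n b_j ≥ 0 holds at every extreme point of C_n^1: for x with x_i ∈ {0, b_i} for i < n, x_n ∈ {a_n, b_n}, and y = ∏_{i=1}^n x_i. -/
/-- The inequality `y - Σᵢ (∏_{j≠i} bⱼ) xᵢ + (n-1) ∏ⱼ bⱼ ≥ 0` holds at every
extreme point of `C_n^1`. -/
theorem second_inequality_valid (n : ℕ) (hn : 2 ≤ n) (b : Fin (n - 1) → ℝ)
    (hb : ∀ i, 0 < b i) (an bn : ℝ) (hbn : 0 < bn) (han : 0 ≤ an)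
    (hab : an < bn)
    (x : Fin (n - 1) → ℝ) (hx : ∀ i, x i = 0 ∨ x i = b i)
    (xn : ℝ) (hxn : xn = an ∨ xn = bn) :
    0 ≤ (∏ i, x i) * xn -
        (∑ i, (bn * ∏ j ∈ Finset.univ.erase i, b j) * x i) -
        (∏ j, b j) * xn +
        ((n : ℝ) - 1) * bn * ∏ j, b j := by
  have hB : 0 < ∏ j, b j := Finset.prod_pos (fun i _ => hb i)
  have hxnle : xn ≤ bn := by rcases hxn with h | h <;> simp [h, le_of_lt hab]
  have hc : ((n - 1 : ℕ) : ℝ) = (n : ℝ) - 1 := by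
    rw [Nat.cast_sub (by omega)]; simp
  by_cases hall : ∀ i, x i = b i
  · have hprod : ∏ i, x i = ∏ j, b j := Finset.prod_congr rfl (fun i _ => hall i)
    have hsum : ∑ i, (bn * ∏ j ∈ Finset.univ.erase i, b j) * x i
        = ((n - 1 : ℕ) : ℝ) * (bn * ∏ j, b j) := by
      rw [Finset.sum_congr rfl (fun i _ => ?_), Finset.sum_const, Finset.card_univ,
        Fintype.card_fin, nsmul_eq_mul]
      rw [hall i, mul_assoc, Finset.prod_erase_mul _ _ (Finset.mem_univ i)]
    rw [hprod, hsum, hc]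
    ring_nf
    nlinarith [mul_pos hbn hB]
  · push_neg at hall
    obtain ⟨k, hk⟩ := hall
    have hxk : x k = 0 := (hx k).resolve_right hk
    have hprod : ∏ i, x i = 0 := Finset.prod_eq_zero (Finset.mem_univ k) hxk
    have hterm : ∀ i, (bn * ∏ j ∈ Finset.univ.erase i, b j) * x i ≤ bn * ∏ j, b j := by
      intro i
      rcases hx i with h | h
      · rw [h, mul_zero]; positivity
      · rw [h, mul_assoc, Finset.prod_erase_mul _ _ (Finset.mem_univ i)]
    have hc2 : ((n - 1 - 1 : ℕ) : ℝ) = (n : ℝ) - 2 := by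
      rw [Nat.sub_sub, Nat.cast_sub hn]; norm_num
    have hsum : ∑ i, (bn * ∏ j ∈ Finset.univ.erase i, b j) * x i
        ≤ ((n : ℝ) - 2) * (bn * ∏ j, b j) := by
      rw [← Finset.sum_erase_add _ _ (Finset.mem_univ k), hxk, mul_zero, add_zero]
      calc ∑ i ∈ Finset.univ.erase k, (bn * ∏ j ∈ Finset.univ.erase i, b j) * x i
          ≤ ∑ _i ∈ Finset.univ.erase k, (bn * ∏ j, b j) :=
            Finset.sum_le_sum (fun i _ => hterm i)
        _ = ((n : ℝ) - 2) * (bn * ∏ j, b j) := by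
            rw [Finset.sum_const, Finset.card_erase_of_mem (Finset.mem_univ k),
              Finset.card_univ, Fintype.card_fin, nsmul_eq_mul, hc2]
    rw [hprod]
    nlinarith [mul_le_mul_of_nonneg_left hxnle hB.le, mul_pos hbn hB]
end

section
/- For each i < n, the inequality -y + (a_n ∏_{j<n, j≠i} b_j) x_i + (∏_{j<n} b_j) x_n - a_n ∏_{j<n} b_j ≥ 0 holds at every extreme point of C_n^1. -/
/-- For each `i < n`, the inequality
`-y + (aₙ ∏_{j<n, j≠i} bⱼ) xᵢ + (∏_{j<n} bⱼ) xₙ - aₙ ∏_{j<n} bⱼ ≥ 0` holds at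
every extreme point of `C_n^1`. -/
theorem third_inequality_valid (n : ℕ) (hn : 2 ≤ n) (b : Fin (n - 1) → ℝ)
    (hb : ∀ j, 0 < b j) (an bn : ℝ) (han : 0 ≤ an) (hab : an < bn)
    (i : Fin (n - 1))
    (x : Fin (n - 1) → ℝ) (hx : ∀ j, x j = 0 ∨ x j = b j)
    (xn : ℝ) (hxn : xn = an ∨ xn = bn) :
    0 ≤ -((∏ j, x j) * xn) +
        (an * ∏ j ∈ Finset.univ.erase i, b j) * x i +
        (∏ j, b j) * xn - an * ∏ j, b j := by
  have hxnan : an ≤ xn := by rcases hxn with h | h <;> simp [h]; exact hab.le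
  have hxn0 : 0 ≤ xn := le_trans han hxnan
  have hB : 0 ≤ ∏ j, b j := Finset.prod_nonneg fun j _ => (hb j).le
  rcases hx i with h0 | hbi
  · have hP : (∏ j, x j) = 0 := Finset.prod_eq_zero (Finset.mem_univ i) h0
    rw [hP, h0]
    ring_nf
    nlinarith [mul_le_mul_of_nonneg_left hxnan hB]
  · have hPB : (∏ j, x j) ≤ ∏ j, b j := by
      apply Finset.prod_le_prod
      · intro j _; rcases hx j with h | h <;> simp [h, (hb j).le]
      · intro j _; rcases hx j with h | h <;> simp [h, (hb j).le]
    have hbi' : (∏ j ∈ Finset.univ.erase i, b j) * x i = ∏ j, b j := by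
      rw [hbi, ← Finset.prod_erase_mul Finset.univ b (Finset.mem_univ i)]
    nlinarith [mul_le_mul_of_nonneg_right hPB hxn0]
end

section
/- For each i < n, the inequality y ≤ (b_n ∏_{j<n, j≠i} b_j) x_i holds for every point in the box [0,b_1]×⋯×[0,b_{n-1}]×[a_n,b_n] with y = ∏_{j=1}^n x_j, and hence (by linearity) on C_n^1. -/
/-- For each `i < n`, the inequality `y ≤ (bₙ ∏_{j<n, j≠i} bⱼ) xᵢ` holds for
every point of the box `[0,b₁]×⋯×[0,b_{n-1}]×[aₙ,bₙ]` with `y = ∏ⱼ xⱼ`. -/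
theorem fourth_inequality_valid (n : ℕ) (hn : 2 ≤ n) (b : Fin (n - 1) → ℝ)
    (hb : ∀ j, 0 < b j) (an bn : ℝ) (hbn : 0 < bn) (han : 0 ≤ an)
    (hab : an < bn) (i : Fin (n - 1))
    (x : Fin (n - 1) → ℝ) (hx : ∀ j, 0 ≤ x j ∧ x j ≤ b j)
    (xn : ℝ) (hxn : an ≤ xn ∧ xn ≤ bn) :
    (∏ j, x j) * xn ≤ (bn * ∏ j ∈ Finset.univ.erase i, b j) * x i := by
  have hxnn : ∀ j, 0 ≤ x j := fun j => (hx j).1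
  have hxpos : 0 ≤ xn := le_trans han hxn.1
  have h1 : (∏ j, x j) = x i * ∏ j ∈ Finset.univ.erase i, x j :=
    (Finset.mul_prod_erase _ _ (Finset.mem_univ i)).symm
  have h2 : (∏ j ∈ Finset.univ.erase i, x j) ≤ ∏ j ∈ Finset.univ.erase i, b j :=
    Finset.prod_le_prod (fun j _ => hxnn j) (fun j _ => (hx j).2)
  have h3 : 0 ≤ ∏ j ∈ Finset.univ.erase i, x j :=
    Finset.prod_nonneg fun j _ => hxnn j
  calc (∏ j, x j) * xn = x i * ((∏ j ∈ Finset.univ.erase i, x j) * xn) := by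
        rw [h1]; ring
    _ ≤ x i * ((∏ j ∈ Finset.univ.erase i, b j) * bn) := by
        apply mul_le_mul_of_nonneg_left _ (hxnn i)
        exact mul_le_mul h2 hxn.2 hxpos (Finset.prod_nonneg fun j _ => (hb j).le)
    _ = (bn * ∏ j ∈ Finset.univ.erase i, b j) * x i := by ring
end

section
/- The maximum of c_0 y + Σ_i c_i x_i over the extreme points of C_n^1 equals the maximum of the four values: (i) c_0 b_n Π + c_n b_n + S, (ii) c_0 a_n Π + c_n a_n + S, (iii) c_n b_n + Σ_{i∈N_n^+} c_i b_i − δ, (iv) c_n a_n + Σ_{i∈N_n^+} c_i b_i − δ, where S = Σ_{i<n} c_i b_i, N_n^+ = {i < n : c_i ≥ 0}, and δ = min_{j<n} c_j b_j if all c_i ≥ 0 (i < n) and δ = 0 otherwise. -/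
/-- The maximum of `c₀ y + Σᵢ cᵢ xᵢ` over the extreme points of `C_n^1` equals
the maximum of the four candidate values from the primal algorithm. -/
theorem primal_algorithm_max (n : ℕ) (hn : 2 ≤ n) (b : Fin (n - 1) → ℝ)
    (hb : ∀ i, 0 < b i) (an bn : ℝ) (han : 0 ≤ an) (hab : an < bn)
    (c0 cn : ℝ) (c : Fin (n - 1) → ℝ) (δ : ℝ)
    (hδpos : (∀ i, 0 ≤ c i) →
      δ = Finset.univ.inf' ⟨⟨0, by omega⟩, Finset.mem_univ _⟩
            (fun j => c j * b j))
    (hδneg : ¬ (∀ i, 0 ≤ c i) → δ = 0) :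
    IsGreatest
      {z : ℝ | ∃ (x : Fin (n - 1) → ℝ) (xn : ℝ),
        (∀ i, x i = 0 ∨ x i = b i) ∧ (xn = an ∨ xn = bn) ∧
        z = c0 * ((∏ i, x i) * xn) + (∑ i, c i * x i) + cn * xn}
      (max
        (max (c0 * bn * (∏ i, b i) + cn * bn + ∑ i, c i * b i)
             (c0 * an * (∏ i, b i) + cn * an + ∑ i, c i * b i))
        (max (cn * bn + (∑ i ∈ Finset.univ.filter (fun i => 0 ≤ c i), c i * b i) - δ)
             (cn * an + (∑ i ∈ Finset.univ.filter (fun i => 0 ≤ c i), c i * b i) - δ))) := by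
  have hne : (Finset.univ : Finset (Fin (n - 1))).Nonempty :=
    ⟨⟨0, by omega⟩, Finset.mem_univ _⟩
  set S := ∑ i, c i * b i with hSdef
  set T := ∑ i ∈ Finset.univ.filter (fun i => 0 ≤ c i), c i * b i with hTdef
  -- The value `cn * xn + T - δ` is achievable for any xn
  have key : ∀ xn : ℝ, ∃ x : Fin (n - 1) → ℝ,
      (∀ i, x i = 0 ∨ x i = b i) ∧
      cn * xn + T - δ = c0 * ((∏ i, x i) * xn) + (∑ i, c i * x i) + cn * xn := by
    intro xn
    by_cases h : ∀ i, 0 ≤ c i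
    · obtain ⟨j, -, hj⟩ := Finset.exists_mem_eq_inf' hne (fun j => c j * b j)
      refine ⟨fun i => if i = j then 0 else b i,
        fun i => by by_cases hi : i = j <;> simp [hi], ?_⟩
      have hprod : (∏ i, (if i = j then (0:ℝ) else b i)) = 0 :=
        Finset.prod_eq_zero (Finset.mem_univ j) (by simp)
      have hsum : (∑ i, c i * (if i = j then (0:ℝ) else b i)) = S - c j * b j := by
        rw [← Finset.sum_erase (a := j) (f := fun i => c i * (if i = j then (0:ℝ) else b i))
          Finset.univ (by simp)]
        rw [Finset.sum_congr rfl
          (fun i hi => by rw [if_neg (Finset.ne_of_mem_erase hi)])]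
        exact Finset.sum_erase_eq_sub (Finset.mem_univ j)
      have hTS : T = S := by
        rw [hTdef, Finset.filter_true_of_mem (fun i _ => h i)]
      have hδj : δ = c j * b j := by rw [hδpos h, hj]
      rw [hprod, hsum, hδj, hTS]; ring
    · obtain ⟨i0, hi0⟩ := not_forall.mp h
      refine ⟨fun i => if 0 ≤ c i then b i else 0,
        fun i => by by_cases hi : 0 ≤ c i <;> simp [hi], ?_⟩
      have hprod : (∏ i, (if 0 ≤ c i then b i else (0:ℝ))) = 0 :=
        Finset.prod_eq_zero (Finset.mem_univ i0) (by simp [hi0])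
      have hsum : (∑ i, c i * (if 0 ≤ c i then b i else (0:ℝ))) = T := by
        rw [hTdef, Finset.sum_filter]
        exact Finset.sum_congr rfl
          (fun i _ => by by_cases hi : 0 ≤ c i <;> simp [hi])
      rw [hprod, hsum, hδneg h]; ring
  constructor
  · -- membership
    have mem1 : c0 * bn * (∏ i, b i) + cn * bn + S ∈
        {z : ℝ | ∃ (x : Fin (n - 1) → ℝ) (xn : ℝ),
          (∀ i, x i = 0 ∨ x i = b i) ∧ (xn = an ∨ xn = bn) ∧
          z = c0 * ((∏ i, x i) * xn) + (∑ i, c i * x i) + cn * xn} :=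
      ⟨b, bn, fun i => Or.inr rfl, Or.inr rfl, by rw [hSdef]; ring⟩
    have mem2 : c0 * an * (∏ i, b i) + cn * an + S ∈
        {z : ℝ | ∃ (x : Fin (n - 1) → ℝ) (xn : ℝ),
          (∀ i, x i = 0 ∨ x i = b i) ∧ (xn = an ∨ xn = bn) ∧
          z = c0 * ((∏ i, x i) * xn) + (∑ i, c i * x i) + cn * xn} :=
      ⟨b, an, fun i => Or.inr rfl, Or.inl rfl, by rw [hSdef]; ring⟩
    have mem3 : cn * bn + T - δ ∈
        {z : ℝ | ∃ (x : Fin (n - 1) → ℝ) (xn : ℝ),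
          (∀ i, x i = 0 ∨ x i = b i) ∧ (xn = an ∨ xn = bn) ∧
          z = c0 * ((∏ i, x i) * xn) + (∑ i, c i * x i) + cn * xn} := by
      obtain ⟨x, hx, hval⟩ := key bn
      exact ⟨x, bn, hx, Or.inr rfl, hval⟩
    have mem4 : cn * an + T - δ ∈
        {z : ℝ | ∃ (x : Fin (n - 1) → ℝ) (xn : ℝ),
          (∀ i, x i = 0 ∨ x i = b i) ∧ (xn = an ∨ xn = bn) ∧
          z = c0 * ((∏ i, x i) * xn) + (∑ i, c i * x i) + cn * xn} := by
      obtain ⟨x, hx, hval⟩ := key an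
      exact ⟨x, an, hx, Or.inl rfl, hval⟩
    rcases max_choice (max (c0 * bn * (∏ i, b i) + cn * bn + S)
        (c0 * an * (∏ i, b i) + cn * an + S))
        (max (cn * bn + T - δ) (cn * an + T - δ)) with h | h <;> rw [h]
    · rcases max_choice (c0 * bn * (∏ i, b i) + cn * bn + S)
        (c0 * an * (∏ i, b i) + cn * an + S) with h' | h' <;> rw [h']
      · exact mem1
      · exact mem2
    · rcases max_choice (cn * bn + T - δ) (cn * an + T - δ) with h' | h' <;> rw [h']
      · exact mem3
      · exact mem4
  · -- upper bound
    rintro z ⟨x, xn, hx, hxn, rfl⟩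
    by_cases hall : ∀ i, x i = b i
    · have hprod : ∏ i, x i = ∏ i, b i :=
        Finset.prod_congr rfl (fun i _ => hall i)
      have hsum : ∑ i, c i * x i = S :=
        Finset.sum_congr rfl (fun i _ => by rw [hall i])
      rw [hprod, hsum]
      rcases hxn with rfl | rfl
      · exact le_max_of_le_left (le_max_of_le_right (le_of_eq (by ring)))
      · exact le_max_of_le_left (le_max_of_le_left (le_of_eq (by ring)))
    · obtain ⟨j, hj⟩ := not_forall.mp hall
      have hxj : x j = 0 := (hx j).resolve_right hj
      have hprod : ∏ i, x i = 0 := Finset.prod_eq_zero (Finset.mem_univ j) hxj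
      have hle : ∑ i, c i * x i ≤ T - δ := by
        by_cases h : ∀ i, 0 ≤ c i
        · have hTS : T = S := by
            rw [hTdef, Finset.filter_true_of_mem (fun i _ => h i)]
          have hδle : δ ≤ c j * b j := by
            rw [hδpos h]; exact Finset.inf'_le _ (Finset.mem_univ j)
          have h1 : ∑ i, c i * x i = ∑ i ∈ Finset.univ.erase j, c i * x i :=
            (Finset.sum_erase _ (by rw [hxj, mul_zero])).symm
          have h2 : ∑ i ∈ Finset.univ.erase j, c i * x i ≤
              ∑ i ∈ Finset.univ.erase j, c i * b i := by
            apply Finset.sum_le_sum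
            intro i _
            apply mul_le_mul_of_nonneg_left _ (h i)
            rcases hx i with h' | h'
            · rw [h']; exact (hb i).le
            · rw [h']
          have h3 : ∑ i ∈ Finset.univ.erase j, c i * b i = S - c j * b j :=
            Finset.sum_erase_eq_sub (Finset.mem_univ j)
          linarith
        · rw [hδneg h]
          have hT : T = ∑ i, (if 0 ≤ c i then c i * b i else 0) := by
            rw [hTdef, Finset.sum_filter]
          have hle2 : ∑ i, c i * x i ≤ ∑ i, (if 0 ≤ c i then c i * b i else 0) := by
            apply Finset.sum_le_sum
            intro i _
            by_cases hi : 0 ≤ c i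
            · rw [if_pos hi]
              apply mul_le_mul_of_nonneg_left _ hi
              rcases hx i with h' | h'
              · rw [h']; exact (hb i).le
              · rw [h']
            · rw [if_neg hi]
              have hxnn : 0 ≤ x i := by
                rcases hx i with h' | h' <;> rw [h']
                · exact (hb i).le
              exact mul_nonpos_of_nonpos_of_nonneg (le_of_not_ge hi) hxnn
          linarith
      rw [hprod]
      have hz : c0 * ((0:ℝ) * xn) = 0 := by ring
      rcases hxn with rfl | rfl
      · refine le_max_of_le_right (le_max_of_le_right ?_)
        linarith
      · refine le_max_of_le_right (le_max_of_le_left ?_)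
        linarith
end
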